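/- arXiv:1011.1001 — 8 statements merged into one kernel-verified Lean document; each statement's English description precedes it below -/
import Mathlib

section
/- Let Γ be a lattice in ℝ^d. The set OC(Γ) of orthogonal transformations R ∈ O(d) such that Γ ∩ RΓ has finite index in Γ forms a subgroup of O(d): it contains the identity, is closed under inverses, and is closed under composition. -/
/-- `R` is a coincidence isometry of the lattice `Γ`: the coincidence site lattice
`Γ ⊓ RΓ` has finite index in `Γ`. -/
def IsCoincidenceIsometry {d : ℕ} (Γ : AddSubgroup (EuclideanSpace ℝ (Fin d)))
    (R : EuclideanSpace ℝ (Fin d) ≃ₗᵢ[ℝ] EuclideanSpace ℝ (Fin d)) : Prop :=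
  AddSubgroup.relIndex
    (Γ ⊓ AddSubgroup.map R.toLinearEquiv.toLinearMap.toAddMonoidHom Γ) Γ ≠ 0

open AddSubgroup

/-- The relative index with respect to a lattice is nonzero iff the intersection is
isomorphic to `ℤ^d`. -/
lemma lattice_relindex_iff {d : ℕ} (c : Module.Basis (Fin d) ℝ (EuclideanSpace ℝ (Fin d)))
    (K : AddSubgroup (EuclideanSpace ℝ (Fin d))) :
    K.relIndex (AddSubgroup.closure (Set.range c)) ≠ 0 ↔
      Nonempty ((K ⊓ AddSubgroup.closure (Set.range c) :
        AddSubgroup (EuclideanSpace ℝ (Fin d))) ≃+ (Fin d → ℤ)) := by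
  classical
  have hli : LinearIndependent ℤ c :=
    c.linearIndependent.restrict_scalars (by
      intro x y h
      have : (x : ℝ) = (y : ℝ) := by simpa using h
      exact_mod_cast this)
  have heq : (Submodule.span ℤ (Set.range c)).toAddSubgroup = AddSubgroup.closure (Set.range c) :=
    Submodule.span_int_eq_addSubgroupClosure _
  let bZ : Module.Basis (Fin d) ℤ (Submodule.span ℤ (Set.range c)) := Module.Basis.span hli
  let e : (AddSubgroup.closure (Set.range c) : AddSubgroup (EuclideanSpace ℝ (Fin d))) ≃+ (Fin d → ℤ) :=
    (AddEquiv.addSubgroupCongr heq.symm).trans bZ.equivFun.toAddEquiv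
  have hrel : K.relIndex (AddSubgroup.closure (Set.range c)) =
      ((K.addSubgroupOf (AddSubgroup.closure (Set.range c))).map
        (e : (AddSubgroup.closure (Set.range c) : AddSubgroup _) →+ (Fin d → ℤ))).index := by
    rw [AddSubgroup.index_map_of_injective _ e.injective]
    have : (e : (AddSubgroup.closure (Set.range c) : AddSubgroup _) →+ (Fin d → ℤ)).range = ⊤ :=
      AddMonoidHom.range_eq_top.mpr e.surjective
    rw [this, AddSubgroup.index_top, mul_one]
    rfl
  have g : (K ⊓ AddSubgroup.closure (Set.range c) : AddSubgroup (EuclideanSpace ℝ (Fin d))) ≃+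
      ((K.addSubgroupOf (AddSubgroup.closure (Set.range c))).map
        (e : (AddSubgroup.closure (Set.range c) : AddSubgroup _) →+ (Fin d → ℤ))) :=
    ((addSubgroupOfEquivOfLe (inf_le_right : K ⊓ AddSubgroup.closure (Set.range c) ≤
        AddSubgroup.closure (Set.range c))).symm.trans
      (AddEquiv.addSubgroupCongr (inf_addSubgroupOf_right K (AddSubgroup.closure (Set.range c))))).trans
      (AddEquiv.addSubgroupMap e (K.addSubgroupOf (AddSubgroup.closure (Set.range c))))
  rw [hrel, Int.addSubgroup_index_ne_zero_iff]
  exact ⟨fun ⟨f⟩ => ⟨g.trans f⟩, fun ⟨f⟩ => ⟨g.symm.trans f⟩⟩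

lemma coinc_def' {d : ℕ} (Γ : AddSubgroup (EuclideanSpace ℝ (Fin d)))
    (R : EuclideanSpace ℝ (Fin d) ≃ₗᵢ[ℝ] EuclideanSpace ℝ (Fin d)) :
    IsCoincidenceIsometry Γ R ↔
      (AddSubgroup.map R.toLinearEquiv.toLinearMap.toAddMonoidHom Γ).relIndex Γ ≠ 0 := by
  unfold IsCoincidenceIsometry
  rw [inf_relIndex_left]

lemma map_lattice {d : ℕ} (b : Module.Basis (Fin d) ℝ (EuclideanSpace ℝ (Fin d)))
    (R : EuclideanSpace ℝ (Fin d) ≃ₗᵢ[ℝ] EuclideanSpace ℝ (Fin d)) :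
    AddSubgroup.map R.toLinearEquiv.toLinearMap.toAddMonoidHom (AddSubgroup.closure (Set.range b)) =
      AddSubgroup.closure (Set.range (b.map R.toLinearEquiv)) := by
  rw [AddMonoidHom.map_closure]
  congr 1
  ext x
  constructor
  · rintro ⟨y, ⟨i, rfl⟩, rfl⟩
    exact ⟨i, by simp [Module.Basis.map_apply]⟩
  · rintro ⟨i, rfl⟩
    exact ⟨b i, ⟨i, rfl⟩, by simp [Module.Basis.map_apply]⟩

theorem stmt_3 {d : ℕ} (Γ : AddSubgroup (EuclideanSpace ℝ (Fin d)))
    (hΓ : ∃ b : Module.Basis (Fin d) ℝ (EuclideanSpace ℝ (Fin d)),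
      Γ = AddSubgroup.closure (Set.range b)) :
    IsCoincidenceIsometry Γ (LinearIsometryEquiv.refl ℝ (EuclideanSpace ℝ (Fin d))) ∧
    (∀ R, IsCoincidenceIsometry Γ R → IsCoincidenceIsometry Γ R.symm) ∧
    (∀ R S, IsCoincidenceIsometry Γ R → IsCoincidenceIsometry Γ S →
      IsCoincidenceIsometry Γ (R.trans S)) := by
  obtain ⟨b, rfl⟩ := hΓ
  refine ⟨?_, ?_, ?_⟩
  · -- the identity is a coincidence isometry
    have hid : (LinearIsometryEquiv.refl ℝ
          (EuclideanSpace ℝ (Fin d))).toLinearEquiv.toLinearMap.toAddMonoidHom =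
        AddMonoidHom.id (EuclideanSpace ℝ (Fin d)) := rfl
    unfold IsCoincidenceIsometry
    rw [hid, AddSubgroup.map_id, inf_idem, AddSubgroup.relIndex_self]
    exact one_ne_zero
  · -- closed under inverses
    intro R hR
    rw [coinc_def'] at hR ⊢
    rw [lattice_relindex_iff b] at hR ⊢
    obtain ⟨f⟩ := hR
    set Rh := R.toLinearEquiv.toLinearMap.toAddMonoidHom with hRhdef
    set Sh := R.symm.toLinearEquiv.toLinearMap.toAddMonoidHom with hShdef
    set Γ : AddSubgroup (EuclideanSpace ℝ (Fin d)) := AddSubgroup.closure (Set.range b) with hΓdef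
    let A : EuclideanSpace ℝ (Fin d) ≃+ EuclideanSpace ℝ (Fin d) :=
      R.symm.toLinearEquiv.toAddEquiv
    have hAcoe : (A : EuclideanSpace ℝ (Fin d) →+ EuclideanSpace ℝ (Fin d)) = Sh := rfl
    have hmap : (AddSubgroup.map Rh Γ ⊓ Γ).map
        (A : EuclideanSpace ℝ (Fin d) →+ EuclideanSpace ℝ (Fin d)) =
        AddSubgroup.map Sh Γ ⊓ Γ := by
      rw [AddSubgroup.map_inf _ _ _ A.injective, hAcoe, AddSubgroup.map_map]
      have h1 : Sh.comp Rh = AddMonoidHom.id (EuclideanSpace ℝ (Fin d)) :=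
        AddMonoidHom.ext fun x => R.symm_apply_apply x
      rw [h1, AddSubgroup.map_id, inf_comm]
    exact ⟨((AddEquiv.addSubgroupCongr hmap.symm).trans
      (AddEquiv.addSubgroupMap A (AddSubgroup.map Rh Γ ⊓ Γ)).symm).trans f⟩
  · -- closed under composition
    intro R S hR hS
    rw [coinc_def'] at hR hS ⊢
    set Rh := R.toLinearEquiv.toLinearMap.toAddMonoidHom with hRhdef
    set Sh := S.toLinearEquiv.toLinearMap.toAddMonoidHom with hShdef
    set Γ : AddSubgroup (EuclideanSpace ℝ (Fin d)) := AddSubgroup.closure (Set.range b) with hΓdef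
    have hT : (R.trans S).toLinearEquiv.toLinearMap.toAddMonoidHom = Sh.comp Rh := rfl
    rw [hT, ← AddSubgroup.map_map]
    refine AddSubgroup.relIndex_ne_zero_trans (K := AddSubgroup.map Sh Γ) ?_ hS
    rw [lattice_relindex_iff b] at hR
    obtain ⟨f⟩ := hR
    have hSl : AddSubgroup.map Sh Γ = AddSubgroup.closure (Set.range (b.map S.toLinearEquiv)) := by
      rw [hΓdef, hShdef]; exact map_lattice b S
    rw [hSl, lattice_relindex_iff (b.map S.toLinearEquiv), ← hSl]
    let A : EuclideanSpace ℝ (Fin d) ≃+ EuclideanSpace ℝ (Fin d) :=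
      S.toLinearEquiv.toAddEquiv
    have hAcoe : (A : EuclideanSpace ℝ (Fin d) →+ EuclideanSpace ℝ (Fin d)) = Sh := rfl
    have hmap : (AddSubgroup.map Rh Γ ⊓ Γ).map
        (A : EuclideanSpace ℝ (Fin d) →+ EuclideanSpace ℝ (Fin d)) =
        AddSubgroup.map Sh (AddSubgroup.map Rh Γ) ⊓ AddSubgroup.map Sh Γ := by
      rw [AddSubgroup.map_inf _ _ _ A.injective, hAcoe]
    exact ⟨((AddEquiv.addSubgroupCongr hmap.symm).trans
      (AddEquiv.addSubgroupMap A (AddSubgroup.map Rh Γ ⊓ Γ)).symm).trans f⟩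
end

section
/- Let Γ₂ be a finite-index subgroup of a lattice Γ₁ in ℝ^d and let R ∈ O(d). Then R is a coincidence isometry of Γ₁ if and only if R is a coincidence isometry of Γ₂; i.e., Γ₁ ∩ RΓ₁ has finite index in Γ₁ exactly when Γ₂ ∩ RΓ₂ has finite index in Γ₂. -/
open AddSubgroup

/-- relindex is preserved under maps by injective homs. -/
lemma relindex_map_map_aux {A B : Type*} [AddGroup A] [AddGroup B] (f : A →+ B)
    (hf : Function.Injective f) (H K : AddSubgroup A) :
    (H.map f).relIndex (K.map f) = H.relIndex K := by
  conv_rhs => rw [← AddSubgroup.comap_map_eq_self_of_injective hf H]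
  rw [AddSubgroup.relIndex_comap]

/-- A lattice has finite index in itself after scaling by a nonzero integer. -/
lemma lattice_nsmul_relindex_aux {d n : ℕ} (hn : n ≠ 0)
    (b : Module.Basis (Fin d) ℝ (EuclideanSpace ℝ (Fin d))) :
    ((AddSubgroup.closure (Set.range ⇑b)).map
        (smulAddHom ℤ (EuclideanSpace ℝ (Fin d)) (n : ℤ))).relIndex
      (AddSubgroup.closure (Set.range ⇑b)) ≠ 0 := by
  haveI : NeZero n := ⟨hn⟩
  set S : Submodule ℤ (EuclideanSpace ℝ (Fin d)) := Submodule.span ℤ (Set.range ⇑b) with hS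
  have hSG : S.toAddSubgroup = AddSubgroup.closure (Set.range ⇑b) :=
    Submodule.span_int_eq_addSubgroupClosure _
  rw [← hSG]
  set b' : Module.Basis (Fin d) ℤ S := b.restrictScalars ℤ with hb'
  -- the homomorphism to a finite group
  set ψ : S.toAddSubgroup →+ (Fin d → ZMod n) :=
    { toFun := fun x i => ((b'.repr ⟨x.1, x.2⟩ i : ℤ) : ZMod n)
      map_zero' := by
        ext i
        have h0 : (⟨(0 : S.toAddSubgroup).1, (0 : S.toAddSubgroup).2⟩ : S) = 0 := rfl
        rw [h0, map_zero]
        simp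
      map_add' := by
        intro x y
        ext i
        have had : (⟨(x + y).1, (x + y).2⟩ : S) = ⟨x.1, x.2⟩ + ⟨y.1, y.2⟩ := rfl
        rw [had, map_add]
        simp } with hψ
  have hker : ψ.ker ≤ ((S.toAddSubgroup.map
      (smulAddHom ℤ (EuclideanSpace ℝ (Fin d)) (n : ℤ))).addSubgroupOf S.toAddSubgroup) := by
    intro x hx
    rw [AddSubgroup.mem_addSubgroupOf]
    have hx' : ∀ i, ((b'.repr ⟨x.1, x.2⟩ i : ℤ) : ZMod n) = 0 := fun i =>
      congrFun (AddMonoidHom.mem_ker.mp hx) i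
    have hdvd : ∀ i, (n : ℤ) ∣ b'.repr ⟨x.1, x.2⟩ i := fun i => by
      have := (ZMod.intCast_zmod_eq_zero_iff_dvd _ n).mp (hx' i)
      exact_mod_cast this
    set c : Fin d →₀ ℤ := (b'.repr ⟨x.1, x.2⟩).mapRange (· / (n : ℤ)) (by simp) with hc
    have hcn : (n : ℤ) • c = b'.repr ⟨x.1, x.2⟩ := by
      ext i
      simp only [hc, Finsupp.smul_apply, Finsupp.mapRange_apply, smul_eq_mul]
      exact Int.mul_ediv_cancel' (hdvd i)
    set y : S := b'.repr.symm c with hy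
    have hxy : (⟨x.1, x.2⟩ : S) = (n : ℤ) • y := by
      apply b'.repr.injective
      rw [map_zsmul, hy, LinearEquiv.apply_symm_apply, hcn]
    refine ⟨y.1, y.2, ?_⟩
    have : ((n : ℤ) • y : S).1 = (n : ℤ) • (y.1) := rfl
    rw [smulAddHom_apply, ← this, ← hxy]
  have hkeridx : ψ.ker.index ≠ 0 := by
    rw [AddSubgroup.index_ker]
    exact Nat.card_pos.ne' 
  have : ((S.toAddSubgroup.map
      (smulAddHom ℤ (EuclideanSpace ℝ (Fin d)) (n : ℤ))).addSubgroupOf S.toAddSubgroup).index ≠ 0 :=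
    fun h => hkeridx (Nat.eq_zero_of_zero_dvd (h ▸ AddSubgroup.index_dvd_of_le hker))
  exact this

theorem stmt_4 {d : ℕ} (Γ₁ Γ₂ : AddSubgroup (EuclideanSpace ℝ (Fin d)))
    (hΓ : ∃ b : Module.Basis (Fin d) ℝ (EuclideanSpace ℝ (Fin d)),
      Γ₁ = AddSubgroup.closure (Set.range b))
    (hle : Γ₂ ≤ Γ₁) (hidx : AddSubgroup.relIndex Γ₂ Γ₁ ≠ 0)
    (R : EuclideanSpace ℝ (Fin d) ≃ₗᵢ[ℝ] EuclideanSpace ℝ (Fin d)) :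
    AddSubgroup.relIndex
      (Γ₁ ⊓ AddSubgroup.map R.toLinearEquiv.toLinearMap.toAddMonoidHom Γ₁) Γ₁ ≠ 0 ↔
    AddSubgroup.relIndex
      (Γ₂ ⊓ AddSubgroup.map R.toLinearEquiv.toLinearMap.toAddMonoidHom Γ₂) Γ₂ ≠ 0 := by
  obtain ⟨b, hb⟩ := hΓ
  set Rm := R.toLinearEquiv.toLinearMap.toAddMonoidHom with hRm
  have hRmx : ∀ x, Rm x = R x := fun x => rfl
  have hRinj : Function.Injective Rm := fun x y h => R.injective h
  set n := Γ₂.relIndex Γ₁ with hn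
  set m := smulAddHom ℤ (EuclideanSpace ℝ (Fin d)) (n : ℤ) with hm
  have hmx : ∀ x, m x = (n : ℤ) • x := fun x => rfl
  have hnz : (n : ℤ) ≠ 0 := Int.natCast_ne_zero.mpr hidx
  have hminj : Function.Injective m := by
    intro x y h
    have h' : (n : ℤ) • x = (n : ℤ) • y := by simpa [hmx] using h
    rw [← Int.cast_smul_eq_zsmul ℝ, ← Int.cast_smul_eq_zsmul ℝ] at h'
    exact smul_right_injective (EuclideanSpace ℝ (Fin d)) (by exact_mod_cast hnz) h'
  -- the maps commute
  have hcomm : ∀ H : AddSubgroup (EuclideanSpace ℝ (Fin d)),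
      (H.map m).map Rm = (H.map Rm).map m := by
    intro H
    rw [AddSubgroup.map_map, AddSubgroup.map_map]
    congr 1
    ext x
    simp [hRmx, hmx, map_zsmul]
  -- n Γ₁ ≤ Γ₂
  have hsub : Γ₁.map m ≤ Γ₂ := by
    rintro _ ⟨g, hg, rfl⟩
    have := AddSubgroup.nsmul_index_mem (Γ₂.addSubgroupOf Γ₁) ⟨g, hg⟩
    rw [AddSubgroup.mem_addSubgroupOf] at this
    have h2 : ((Γ₂.addSubgroupOf Γ₁).index • (⟨g, hg⟩ : Γ₁) : Γ₁).1 = n • g := rfl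
    rw [h2] at this
    simpa [hmx, natCast_zsmul] using this
  constructor
  · intro h1
    set K := (Γ₁ ⊓ Γ₁.map Rm).map m with hK
    have hKΓ₂ : K ≤ Γ₂ ⊓ Γ₂.map Rm := by
      refine le_inf ?_ ?_
      · exact le_trans (AddSubgroup.map_mono inf_le_left) hsub
      · refine le_trans (AddSubgroup.map_mono inf_le_right) ?_
        rw [← hcomm]
        exact le_trans (AddSubgroup.map_mono hsub) le_rfl
    -- K has finite relindex in Γ₁
    have h2 : K.relIndex (Γ₁.map m) = (Γ₁ ⊓ Γ₁.map Rm).relIndex Γ₁ :=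
      relindex_map_map_aux m hminj _ _
    have h3 : (Γ₁.map m).relIndex Γ₁ ≠ 0 := by
      rw [hb, hm, hn]
      exact lattice_nsmul_relindex_aux hidx b
    have hKle : K ≤ Γ₁.map m := AddSubgroup.map_mono inf_le_left
    have hmle : Γ₁.map m ≤ Γ₁ := le_trans hsub hle
    have h4 : K.relIndex Γ₁ ≠ 0 := by
      rw [← AddSubgroup.relIndex_mul_relIndex K (Γ₁.map m) Γ₁ hKle hmle]
      exact Nat.mul_ne_zero (h2 ▸ h1) h3
    have hKΓ₂' : K ≤ Γ₂ := le_trans hKΓ₂ inf_le_left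
    have h5 : K.relIndex Γ₂ ≠ 0 := by
      intro h
      apply h4
      rw [← AddSubgroup.relIndex_mul_relIndex K Γ₂ Γ₁ hKΓ₂' hle, h, zero_mul]
    exact fun h => h5 (Nat.eq_zero_of_zero_dvd (h ▸ AddSubgroup.relIndex_dvd_of_le_left Γ₂ hKΓ₂))
  · intro h2
    have hsub2 : Γ₂ ⊓ Γ₂.map Rm ≤ Γ₁ ⊓ Γ₁.map Rm := inf_le_inf hle (AddSubgroup.map_mono hle)
    have h3 : (Γ₂ ⊓ Γ₂.map Rm).relIndex Γ₁ ≠ 0 := by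
      rw [← AddSubgroup.relIndex_mul_relIndex (Γ₂ ⊓ Γ₂.map Rm) Γ₂ Γ₁ inf_le_left hle]
      exact Nat.mul_ne_zero h2 hidx
    exact fun h => h3 (Nat.eq_zero_of_zero_dvd
      (h ▸ AddSubgroup.relIndex_dvd_of_le_left Γ₁ hsub2))
end

section
/- Let Γ₂ ≤ Γ₁ be subgroups of an abelian group G with [Γ₁ : Γ₂] = m finite, and let R be an automorphism of G such that Σ₁ := [Γ₁ : Γ₁(R)] and Σ₂ := [Γ₂ : Γ₂(R)] are finite (where H(R) = H ⊓ R(H)). Then Σ₁ divides m · Σ₂ and Σ₂ divides m · Σ₁. -/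
open AddSubgroup in
lemma relindex_dvd_of_le_right' {G : Type*} [AddCommGroup G] (H : AddSubgroup G)
    {K L : AddSubgroup G} (h : K ≤ L) : H.relIndex K ∣ H.relIndex L := by
  have h1 : H.relIndex K = H.relIndex (K ⊔ H) := (relIndex_sup_right K H).symm
  have h2 : H.relIndex L = H.relIndex (L ⊔ H) := (relIndex_sup_right L H).symm
  rw [h1, h2]
  exact Dvd.intro _ (relIndex_mul_relIndex H (K ⊔ H) (L ⊔ H) le_sup_right
    (sup_le_sup_right h H))

theorem stmt_7 {G : Type*} [AddCommGroup G] (Γ₁ Γ₂ : AddSubgroup G) (hle : Γ₂ ≤ Γ₁)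
    (R : G ≃+ G) (m S₁ S₂ : ℕ)
    (hm : AddSubgroup.relIndex Γ₂ Γ₁ = m) (hm0 : m ≠ 0)
    (hS₁ : AddSubgroup.relIndex (Γ₁ ⊓ AddSubgroup.map R.toAddMonoidHom Γ₁) Γ₁ = S₁)
    (hS₁0 : S₁ ≠ 0)
    (hS₂ : AddSubgroup.relIndex (Γ₂ ⊓ AddSubgroup.map R.toAddMonoidHom Γ₂) Γ₂ = S₂)
    (hS₂0 : S₂ ≠ 0) :
    S₁ ∣ m * S₂ ∧ S₂ ∣ m * S₁ := by
  classical
  set f := R.toAddMonoidHom with hf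
  have hmaple : AddSubgroup.map f Γ₂ ≤ AddSubgroup.map f Γ₁ := AddSubgroup.map_mono hle
  set H₁ := Γ₁ ⊓ AddSubgroup.map f Γ₁ with hH₁
  set H₂ := Γ₂ ⊓ AddSubgroup.map f Γ₂ with hH₂
  set K := Γ₂ ⊓ AddSubgroup.map f Γ₁ with hK
  have hH₂K : H₂ ≤ K := inf_le_inf_left Γ₂ hmaple
  have hKΓ₂ : K ≤ Γ₂ := inf_le_left
  constructor
  · -- S₁ ∣ m * S₂
    have key : AddSubgroup.relIndex H₂ Γ₂ * AddSubgroup.relIndex Γ₂ Γ₁ =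
        AddSubgroup.relIndex H₂ Γ₁ :=
      AddSubgroup.relIndex_mul_relIndex H₂ Γ₂ Γ₁ (le_trans hH₂K hKΓ₂) hle
    have hdvd : AddSubgroup.relIndex H₁ Γ₁ ∣ AddSubgroup.relIndex H₂ Γ₁ :=
      AddSubgroup.relIndex_dvd_of_le_left Γ₁ (inf_le_inf hle hmaple)
    rw [hS₂, hm] at key
    rw [← hS₁, mul_comm, key]
    exact hdvd
  · -- S₂ ∣ m * S₁
    have key : AddSubgroup.relIndex H₂ K * AddSubgroup.relIndex K Γ₂ =
        AddSubgroup.relIndex H₂ Γ₂ :=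
      AddSubgroup.relIndex_mul_relIndex H₂ K Γ₂ hH₂K hKΓ₂
    -- second factor divides S₁
    have hb : AddSubgroup.relIndex K Γ₂ ∣ S₁ := by
      have e1 : AddSubgroup.relIndex K Γ₂ =
          AddSubgroup.relIndex (AddSubgroup.map f Γ₁) Γ₂ := by
        rw [hK, inf_comm, AddSubgroup.inf_relIndex_right]
      have e2 : AddSubgroup.relIndex (AddSubgroup.map f Γ₁) Γ₁ = S₁ := by
        rw [← hS₁, hH₁, inf_comm, AddSubgroup.inf_relIndex_right]
      rw [e1, ← e2]
      exact relindex_dvd_of_le_right' _ hle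
    -- first factor divides m
    have ha : AddSubgroup.relIndex H₂ K ∣ m := by
      have e1 : AddSubgroup.relIndex H₂ K =
          AddSubgroup.relIndex (AddSubgroup.map f Γ₂) K := by
        have : AddSubgroup.map f Γ₂ ⊓ K = H₂ := by
          rw [hK, hH₂]
          rw [← inf_assoc, inf_comm (AddSubgroup.map f Γ₂) Γ₂, inf_assoc,
            inf_eq_left.mpr hmaple]
        rw [← this, AddSubgroup.inf_relIndex_right]
      have e2 : AddSubgroup.relIndex (AddSubgroup.map f Γ₂) (AddSubgroup.map f Γ₁) = m := by
        rw [← hm]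
        have hinj : Function.Injective f := R.injective
        rw [← AddSubgroup.comap_map_eq_self_of_injective hinj Γ₂,
          AddSubgroup.relIndex_comap, AddSubgroup.comap_map_eq_self_of_injective hinj Γ₂]
      rw [e1, ← e2]
      exact relindex_dvd_of_le_right' _ inf_le_right
    rw [← hS₂, ← key]
    exact mul_dvd_mul ha hb
end

section
/- Let Γ₂ ≤ Γ₁ be subgroups of an abelian group G with finite index m, and R an automorphism of G with [Γ₁ : Γ₁(R)] finite. Call R a colour coincidence if R(Γ₂ ⊓ Γ₁(R⁻¹)) = Γ₂ ⊓ Γ₁(R). If R is a colour coincidence, then Γ₂(R) = Γ₂ ⊓ Γ₁(R), i.e. the CSL of Γ₂ equals the set of points of Γ₂ lying in Γ₁(R). -/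
theorem stmt_8 {G : Type*} [AddCommGroup G] (Γ₁ Γ₂ : AddSubgroup G) (hle : Γ₂ ≤ Γ₁)
    (R : G ≃+ G) (m : ℕ)
    (hm : AddSubgroup.relIndex Γ₂ Γ₁ = m) (hm0 : m ≠ 0)
    (hS₁ : AddSubgroup.relIndex (Γ₁ ⊓ AddSubgroup.map R.toAddMonoidHom Γ₁) Γ₁ ≠ 0)
    (hcc : AddSubgroup.map R.toAddMonoidHom
        (Γ₂ ⊓ (Γ₁ ⊓ AddSubgroup.map R.symm.toAddMonoidHom Γ₁)) =
      Γ₂ ⊓ (Γ₁ ⊓ AddSubgroup.map R.toAddMonoidHom Γ₁)) :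
    Γ₂ ⊓ AddSubgroup.map R.toAddMonoidHom Γ₂ =
      Γ₂ ⊓ (Γ₁ ⊓ AddSubgroup.map R.toAddMonoidHom Γ₁) := by
  apply le_antisymm
  · exact le_inf inf_le_left (le_inf (inf_le_left.trans hle)
      (inf_le_right.trans (AddSubgroup.map_mono hle)))
  · refine le_inf inf_le_left ?_
    rw [← hcc]
    exact AddSubgroup.map_mono inf_le_left
end

section
/- Let Γ₂ ≤ Γ₁ be subgroups of an abelian group G with [Γ₁ : Γ₂] = m finite, and R an automorphism of G with Σ₁ := [Γ₁ : Γ₁(R)] and Σ₂ := [Γ₂ : Γ₂(R)] finite. If R(Γ₂ ⊓ Γ₁(R⁻¹)) = Γ₂ ⊓ Γ₁(R) (R is a colour coincidence), then Σ₂ divides Σ₁. -/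
theorem stmt_9 {G : Type*} [AddCommGroup G] (Γ₁ Γ₂ : AddSubgroup G) (hle : Γ₂ ≤ Γ₁)
    (R : G ≃+ G) (m S₁ S₂ : ℕ)
    (hm : AddSubgroup.relIndex Γ₂ Γ₁ = m) (hm0 : m ≠ 0)
    (hS₁ : AddSubgroup.relIndex (Γ₁ ⊓ AddSubgroup.map R.toAddMonoidHom Γ₁) Γ₁ = S₁)
    (hS₁0 : S₁ ≠ 0)
    (hS₂ : AddSubgroup.relIndex (Γ₂ ⊓ AddSubgroup.map R.toAddMonoidHom Γ₂) Γ₂ = S₂)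
    (hS₂0 : S₂ ≠ 0)
    (hcc : AddSubgroup.map R.toAddMonoidHom
        (Γ₂ ⊓ (Γ₁ ⊓ AddSubgroup.map R.symm.toAddMonoidHom Γ₁)) =
      Γ₂ ⊓ (Γ₁ ⊓ AddSubgroup.map R.toAddMonoidHom Γ₁)) :
    S₂ ∣ S₁ := by
  set Γ₁R := Γ₁ ⊓ AddSubgroup.map R.toAddMonoidHom Γ₁ with hΓ₁R
  set K := Γ₂ ⊓ Γ₁R with hK
  -- Step 1: K = Γ₂ ⊓ R Γ₂
  have hstep1 : Γ₂ ⊓ AddSubgroup.map R.toAddMonoidHom Γ₂ = K := by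
    apply le_antisymm
    · exact le_inf inf_le_left (le_inf (inf_le_left.trans hle)
        (inf_le_right.trans (AddSubgroup.map_mono hle)))
    · refine le_inf inf_le_left ?_
      show K ≤ _
      rw [← hcc]
      exact AddSubgroup.map_mono inf_le_left
  rw [hstep1] at hS₂
  -- indices
  have hKΓ₂ : K ≤ Γ₂ := inf_le_left
  have hKΓ₁R : K ≤ Γ₁R := inf_le_right
  have hΓ₁RΓ₁ : Γ₁R ≤ Γ₁ := inf_le_left
  set k := AddSubgroup.relIndex K Γ₁R with hk
  have hmul1 : S₂ * m = AddSubgroup.relIndex K Γ₁ := by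
    rw [← hS₂, ← hm]; exact AddSubgroup.relIndex_mul_relIndex K Γ₂ Γ₁ hKΓ₂ hle
  have hmul2 : k * S₁ = AddSubgroup.relIndex K Γ₁ := by
    rw [← hS₁]; exact AddSubgroup.relIndex_mul_relIndex K Γ₁R Γ₁ hKΓ₁R hΓ₁RΓ₁
  -- k divides m
  have hkdvd : k ∣ m := by
    have h1 : k = AddSubgroup.relIndex Γ₂ Γ₁R := by
      rw [hk, hK, AddSubgroup.inf_relIndex_right]
    have h2 : AddSubgroup.relIndex Γ₂ Γ₁R
        = (Γ₂.addSubgroupOf Γ₁).relIndex (Γ₁R.addSubgroupOf Γ₁) := by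
      rw [AddSubgroup.relIndex_addSubgroupOf hΓ₁RΓ₁]
    have h3 : (Γ₂.addSubgroupOf Γ₁).relIndex (Γ₁R.addSubgroupOf Γ₁)
        ∣ (Γ₂.addSubgroupOf Γ₁).index :=
      AddSubgroup.relIndex_dvd_index_of_normal _ _
    rw [h1, h2, ← hm]
    exact h3
  obtain ⟨t, ht⟩ := hkdvd
  have hkne : k ≠ 0 := by
    intro h0
    rw [h0, zero_mul] at hmul2
    rw [← hmul2] at hmul1
    exact hm0 (by simpa [hS₂0] using hmul1)
  refine ⟨t, ?_⟩
  have : k * S₁ = k * (S₂ * t) := by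
    rw [hmul2, ← hmul1, ht]; ring
  exact Nat.eq_of_mul_eq_mul_left (Nat.pos_of_ne_zero hkne) this
end

section
/- Let Γ₂ ≤ Γ₁ be subgroups of an abelian group G with [Γ₁ : Γ₂] = m finite, and R an automorphism of G with Σ₁ := [Γ₁ : Γ₁(R)] and Σ₂ := [Γ₂ : Γ₂(R)] finite. Suppose [Γ₁(R) : Γ₂ ⊓ Γ₁(R)] = m and [Γ₁(R⁻¹) : Γ₂ ⊓ Γ₁(R⁻¹)] = m (all m colours occur in both colourings). Then R is a colour coincidence (i.e. R(Γ₂ ⊓ Γ₁(R⁻¹)) = Γ₂ ⊓ Γ₁(R)) if and only if Σ₂ = Σ₁. -/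
theorem stmt_10 {G : Type*} [AddCommGroup G] (Γ₁ Γ₂ : AddSubgroup G) (hle : Γ₂ ≤ Γ₁)
    (R : G ≃+ G) (m S₁ S₂ : ℕ)
    (hm : AddSubgroup.relIndex Γ₂ Γ₁ = m) (hm0 : m ≠ 0)
    (hS₁ : AddSubgroup.relIndex (Γ₁ ⊓ AddSubgroup.map R.toAddMonoidHom Γ₁) Γ₁ = S₁)
    (hS₁0 : S₁ ≠ 0)
    (hS₂ : AddSubgroup.relIndex (Γ₂ ⊓ AddSubgroup.map R.toAddMonoidHom Γ₂) Γ₂ = S₂)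
    (hS₂0 : S₂ ≠ 0)
    (ht : AddSubgroup.relIndex (Γ₂ ⊓ (Γ₁ ⊓ AddSubgroup.map R.toAddMonoidHom Γ₁))
      (Γ₁ ⊓ AddSubgroup.map R.toAddMonoidHom Γ₁) = m)
    (hs : AddSubgroup.relIndex (Γ₂ ⊓ (Γ₁ ⊓ AddSubgroup.map R.symm.toAddMonoidHom Γ₁))
      (Γ₁ ⊓ AddSubgroup.map R.symm.toAddMonoidHom Γ₁) = m) :
    (AddSubgroup.map R.toAddMonoidHom
        (Γ₂ ⊓ (Γ₁ ⊓ AddSubgroup.map R.symm.toAddMonoidHom Γ₁)) =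
      Γ₂ ⊓ (Γ₁ ⊓ AddSubgroup.map R.toAddMonoidHom Γ₁)) ↔ S₂ = S₁ := by
  have hinj : Function.Injective R.toAddMonoidHom := R.injective
  set Γ₁R : AddSubgroup G := Γ₁ ⊓ AddSubgroup.map R.toAddMonoidHom Γ₁ with hΓ₁R
  set Γ₁R' : AddSubgroup G := Γ₁ ⊓ AddSubgroup.map R.symm.toAddMonoidHom Γ₁ with hΓ₁R'
  set B : AddSubgroup G := Γ₂ ⊓ Γ₁R with hB
  set A : AddSubgroup G := Γ₂ ⊓ Γ₁R' with hA
  set Γ₂R : AddSubgroup G := Γ₂ ⊓ AddSubgroup.map R.toAddMonoidHom Γ₂ with hΓ₂R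
  have hRR' : AddSubgroup.map R.toAddMonoidHom (AddSubgroup.map R.symm.toAddMonoidHom Γ₁) = Γ₁ := by
    rw [AddSubgroup.map_map]
    convert Γ₁.map_id using 2
    ext x
    simp
  -- map R Γ₁R' = Γ₁R
  have hmapΓ : AddSubgroup.map R.toAddMonoidHom Γ₁R' = Γ₁R := by
    rw [hΓ₁R', AddSubgroup.map_inf _ _ _ hinj, hRR', inf_comm]
  -- map R A = RΓ₂ ⊓ Γ₁R
  have hmapA : AddSubgroup.map R.toAddMonoidHom A =
      AddSubgroup.map R.toAddMonoidHom Γ₂ ⊓ Γ₁R := by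
    rw [hA, AddSubgroup.map_inf _ _ _ hinj, hmapΓ]
  -- Γ₂R = B ⊓ map R A
  have hkey : Γ₂R = B ⊓ AddSubgroup.map R.toAddMonoidHom A := by
    rw [hmapA, hB, hΓ₂R]
    have h1 : Γ₂ ⊓ AddSubgroup.map R.toAddMonoidHom Γ₂ ≤ Γ₁R := by
      rw [hΓ₁R]
      exact le_inf (inf_le_left.trans hle) (inf_le_right.trans (AddSubgroup.map_mono hle))
    rw [inf_inf_inf_comm, inf_idem, inf_eq_left.mpr h1]
  -- relIndex B Γ₂ = S₁
  have hBle₂ : B ≤ Γ₂ := inf_le_left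
  have hBle₁R : B ≤ Γ₁R := inf_le_right
  have hΓ₁Rle : Γ₁R ≤ Γ₁ := inf_le_left
  have hchain1 : AddSubgroup.relIndex B Γ₂ * m = m * S₁ := by
    have e1 := AddSubgroup.relIndex_mul_relIndex B Γ₂ Γ₁ hBle₂ hle
    have e2 := AddSubgroup.relIndex_mul_relIndex B Γ₁R Γ₁ hBle₁R hΓ₁Rle
    rw [hm] at e1
    rw [ht, hS₁] at e2
    omega
  have hBS₁ : AddSubgroup.relIndex B Γ₂ = S₁ := by
    have : AddSubgroup.relIndex B Γ₂ * m = S₁ * m := by rw [hchain1, mul_comm]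
    exact Nat.eq_of_mul_eq_mul_right (Nat.pos_of_ne_zero hm0) this
  -- relIndex (map R A) Γ₁R = m
  have hRAm : AddSubgroup.relIndex (AddSubgroup.map R.toAddMonoidHom A) Γ₁R = m := by
    rw [← hmapΓ, ← AddSubgroup.relIndex_comap,
      AddSubgroup.comap_map_eq_self_of_injective hinj, hA, hΓ₁R', hs]
  have hRAle : AddSubgroup.map R.toAddMonoidHom A ≤ Γ₁R := by
    rw [← hmapΓ]; exact AddSubgroup.map_mono inf_le_right
  have hΓ₂Rle : Γ₂R ≤ B := by rw [hkey]; exact inf_le_left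
  constructor
  · intro h
    -- then Γ₂R = B
    have hEq : Γ₂R = B := by rw [hkey, h, inf_idem]
    rw [← hS₂, hEq, hBS₁]
  · intro hSS
    -- Γ₂R = B
    have e := AddSubgroup.relIndex_mul_relIndex Γ₂R B Γ₂ hΓ₂Rle hBle₂
    rw [hBS₁, hS₂, hSS] at e
    have h1 : AddSubgroup.relIndex Γ₂R B = 1 := by
      have : AddSubgroup.relIndex Γ₂R B * S₁ = 1 * S₁ := by omega
      exact Nat.eq_of_mul_eq_mul_right (Nat.pos_of_ne_zero hS₁0) this
    have hBΓ₂R : B = Γ₂R := le_antisymm (AddSubgroup.relIndex_eq_one.mp h1) hΓ₂Rle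
    have hBleRA : B ≤ AddSubgroup.map R.toAddMonoidHom A := by
      rw [hBΓ₂R, hkey]; exact inf_le_right
    have e2 := AddSubgroup.relIndex_mul_relIndex B (AddSubgroup.map R.toAddMonoidHom A)
      Γ₁R hBleRA hRAle
    rw [hRAm, ht] at e2
    have h2 : AddSubgroup.relIndex B (AddSubgroup.map R.toAddMonoidHom A) = 1 := by
      have : AddSubgroup.relIndex B (AddSubgroup.map R.toAddMonoidHom A) * m = 1 * m := by
        omega
      exact Nat.eq_of_mul_eq_mul_right (Nat.pos_of_ne_zero hm0) this
    exact le_antisymm (AddSubgroup.relIndex_eq_one.mp h2) hBleRA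
end

section
/- Let Γ₁ = ℤ² and let Γ₂ ≤ ℤ² be the subgroup generated by (3,0) and (0,1), which has index 3 in ℤ². Let R be the rotation of ℝ² with matrix (1/5)·[[4, −3],[3, 4]]. Then [Γ₂ : Γ₂ ∩ R(Γ₂)] = 5 = [Γ₁ : Γ₁ ∩ R(Γ₁)], i.e. the coincidence indices of R with respect to the rectangular sublattice and the square lattice coincide. -/
open AddSubgroup

private def Lgen (m : ℤ) : AddSubgroup (ℝ × ℝ) where
  carrier := {p | ∃ a b : ℤ, p = (((m * a : ℤ) : ℝ), ((b : ℤ) : ℝ))}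
  zero_mem' := ⟨0, 0, by simp [Prod.ext_iff]⟩
  add_mem' := by
    rintro x y ⟨a, b, rfl⟩ ⟨c, d, rfl⟩
    exact ⟨a + c, b + d, by simp [Prod.ext_iff]; push_cast; ring⟩
  neg_mem' := by
    rintro x ⟨a, b, rfl⟩
    exact ⟨-a, -b, by simp [Prod.ext_iff]⟩

private lemma mem_Lgen {m : ℤ} {p : ℝ × ℝ} :
    p ∈ Lgen m ↔ ∃ a b : ℤ, p = (((m * a : ℤ) : ℝ), ((b : ℤ) : ℝ)) := Iff.rfl

private lemma closure_eq_Lgen (m : ℤ) :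
    AddSubgroup.closure {(((m : ℤ) : ℝ), (0 : ℝ)), ((0 : ℝ), (1 : ℝ))} = Lgen m := by
  apply le_antisymm
  · rw [AddSubgroup.closure_le]
    rintro p (rfl | rfl)
    · exact ⟨1, 0, by push_cast; simp⟩
    · exact ⟨0, 1, by push_cast; simp⟩
  · rintro p ⟨a, b, rfl⟩
    have : (((m * a : ℤ) : ℝ), ((b : ℤ) : ℝ)) =
        a • (((m : ℤ) : ℝ), (0 : ℝ)) + b • ((0 : ℝ), (1 : ℝ)) := by
      simp [Prod.ext_iff, zsmul_eq_mul]; push_cast; ring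
    rw [this]
    exact add_mem (zsmul_mem (AddSubgroup.subset_closure (by simp)) a)
      (zsmul_mem (AddSubgroup.subset_closure (by simp)) b)

private noncomputable def fhom (m : ℤ) (c₁ c₂ : ℤ) (n : ℕ) : (Lgen m) →+ ZMod n :=
  AddMonoidHom.mk' (fun x => ((c₁ * ⌊(x : ℝ × ℝ).1⌋ + c₂ * ⌊(x : ℝ × ℝ).2⌋ : ℤ) : ZMod n))
    (by
      rintro ⟨x, a, b, rfl⟩ ⟨y, c, d, rfl⟩
      simp only [AddSubgroup.coe_add, Prod.fst_add, Prod.snd_add,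
        ← Int.cast_add, Int.floor_intCast]
      push_cast
      ring)

private lemma fhom_apply (m c₁ c₂ : ℤ) (n : ℕ) (a b : ℤ) (h) :
    fhom m c₁ c₂ n ⟨(((m * a : ℤ) : ℝ), ((b : ℤ) : ℝ)), h⟩
      = ((c₁ * (m * a) + c₂ * b : ℤ) : ZMod n) := by
  show ((c₁ * ⌊((m * a : ℤ) : ℝ)⌋ + c₂ * ⌊((b : ℤ) : ℝ)⌋ : ℤ) : ZMod n) = _
  rw [Int.floor_intCast, Int.floor_intCast]

private lemma index_eq {G : Type*} [AddGroup G] {n : ℕ} (f : G →+ ZMod n)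
    (hf : Function.Surjective f) : f.ker.index = n := by
  rw [AddSubgroup.index_ker, AddMonoidHom.range_eq_top.mpr hf]
  rw [AddSubgroup.card_top, Nat.card_zmod]

private lemma mk_mem_Lgen (m a b : ℤ) (h : m ∣ a) :
    (((a : ℤ) : ℝ), ((b : ℤ) : ℝ)) ∈ Lgen m := by
  obtain ⟨c, rfl⟩ := h; exact ⟨c, b, rfl⟩

private lemma Lgen_elim {m a b : ℤ} (h : (((a : ℤ) : ℝ), ((b : ℤ) : ℝ)) ∈ Lgen m) :
    m ∣ a := by
  obtain ⟨c, d, hcd⟩ := h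
  have h1 : ((a : ℤ) : ℝ) = ((m * c : ℤ) : ℝ) := congrArg Prod.fst hcd
  exact ⟨c, by exact_mod_cast h1⟩

theorem stmt_14 (R : (ℝ × ℝ) ≃+ (ℝ × ℝ))
    (hR : ∀ p : ℝ × ℝ, R p = ((4 * p.1 - 3 * p.2) / 5, (3 * p.1 + 4 * p.2) / 5))
    (Γ₁ Γ₂ : AddSubgroup (ℝ × ℝ))
    (hΓ₁ : Γ₁ = AddSubgroup.closure {((1 : ℝ), (0 : ℝ)), ((0 : ℝ), (1 : ℝ))})
    (hΓ₂ : Γ₂ = AddSubgroup.closure {((3 : ℝ), (0 : ℝ)), ((0 : ℝ), (1 : ℝ))}) :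
    AddSubgroup.relIndex Γ₂ Γ₁ = 3 ∧
    AddSubgroup.relIndex (Γ₂ ⊓ AddSubgroup.map R.toAddMonoidHom Γ₂) Γ₂ = 5 ∧
    AddSubgroup.relIndex (Γ₁ ⊓ AddSubgroup.map R.toAddMonoidHom Γ₁) Γ₁ = 5 := by
  have e1 : Γ₁ = Lgen 1 := by rw [hΓ₁, ← closure_eq_Lgen]; norm_num
  have e2 : Γ₂ = Lgen 3 := by rw [hΓ₂, ← closure_eq_Lgen]; norm_num
  subst e1 e2
  have hsymm : ∀ p : ℝ × ℝ,
      R.symm p = ((4 * p.1 + 3 * p.2) / 5, (-3 * p.1 + 4 * p.2) / 5) := by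
    intro p
    rw [AddEquiv.symm_apply_eq, hR]
    rw [Prod.ext_iff]
    constructor <;> (dsimp only; ring)
  have hmap : ∀ (m : ℤ) (x : ℝ × ℝ),
      x ∈ AddSubgroup.map R.toAddMonoidHom (Lgen m) ↔ R.symm x ∈ Lgen m := by
    intro m x
    exact AddSubgroup.mem_map_equiv
  refine ⟨?_, ?_, ?_⟩
  · show ((Lgen 3).addSubgroupOf (Lgen 1)).index = 3
    have hker : (Lgen 3).addSubgroupOf (Lgen 1) = (fhom 1 1 0 3).ker := by
      ext ⟨x, hx⟩
      obtain ⟨a, b, rfl⟩ := mem_Lgen.mp hx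
      rw [AddSubgroup.mem_addSubgroupOf, AddMonoidHom.mem_ker, fhom_apply,
        ZMod.intCast_zmod_eq_zero_iff_dvd]
      constructor
      · intro h
        have := Lgen_elim (m := 3) h
        omega
      · intro h
        exact mk_mem_Lgen 3 (1 * a) b (by omega)
    rw [hker]
    apply index_eq
    intro z
    obtain ⟨k, rfl⟩ := ZMod.intCast_surjective z
    refine ⟨⟨(((1 * k : ℤ) : ℝ), ((0 : ℤ) : ℝ)), mem_Lgen.mpr ⟨k, 0, rfl⟩⟩, ?_⟩
    rw [fhom_apply]; push_cast; ring
  · show ((Lgen 3 ⊓ AddSubgroup.map R.toAddMonoidHom (Lgen 3)).addSubgroupOf (Lgen 3)).index = 5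
    have hker : (Lgen 3 ⊓ AddSubgroup.map R.toAddMonoidHom (Lgen 3)).addSubgroupOf (Lgen 3)
        = (fhom 3 (-1) 3 5).ker := by
      ext ⟨x, hx⟩
      obtain ⟨a, b, rfl⟩ := mem_Lgen.mp hx
      rw [AddSubgroup.mem_addSubgroupOf, AddMonoidHom.mem_ker, fhom_apply,
        ZMod.intCast_zmod_eq_zero_iff_dvd, AddSubgroup.mem_inf,
        and_iff_right ⟨a, b, rfl⟩, hmap, hsymm]
      dsimp only
      constructor
      · rintro ⟨c, d, h⟩
        rw [Prod.ext_iff] at h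
        have h1 : ((4 * ((3 * a : ℤ) : ℝ) + 3 * ((b : ℤ) : ℝ)) / 5) = ((3 * c : ℤ) : ℝ) := h.1
        have h1' : (4 * (3 * a) + 3 * b : ℤ) = 5 * (3 * c) := by
          have : (4 * ((3 * a : ℤ) : ℝ) + 3 * ((b : ℤ) : ℝ)) = 5 * ((3 * c : ℤ) : ℝ) := by
            rw [div_eq_iff (by norm_num : (5:ℝ) ≠ 0)] at h1; linarith
          exact_mod_cast this
        omega
      · intro h
        obtain ⟨c, hc⟩ : ∃ c : ℤ, 4 * (3 * a) + 3 * b = 5 * (3 * c) := ⟨(4 * a + b) / 5, by omega⟩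
        obtain ⟨d, hd⟩ : ∃ d : ℤ, -3 * (3 * a) + 4 * b = 5 * d := ⟨(-9 * a + 4 * b) / 5, by omega⟩
        refine ⟨c, d, ?_⟩
        rw [Prod.ext_iff]
        constructor
        · have := congrArg (Int.cast : ℤ → ℝ) hc
          push_cast at this ⊢
          linarith
        · have := congrArg (Int.cast : ℤ → ℝ) hd
          push_cast at this ⊢
          linarith
    rw [hker]
    apply index_eq
    intro z
    obtain ⟨k, rfl⟩ := ZMod.intCast_surjective z
    refine ⟨⟨(((3 * 0 : ℤ) : ℝ), ((2 * k : ℤ) : ℝ)), mem_Lgen.mpr ⟨0, 2 * k, rfl⟩⟩, ?_⟩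
    rw [fhom_apply]
    have : (-1 * (3 * 0) + 3 * (2 * k) : ℤ) = 6 * k := by ring
    rw [this]
    push_cast
    have h6 : ((6 : ℤ) : ZMod 5) = 1 := by decide
    push_cast at h6
    rw [h6, one_mul]
  · show ((Lgen 1 ⊓ AddSubgroup.map R.toAddMonoidHom (Lgen 1)).addSubgroupOf (Lgen 1)).index = 5
    have hker : (Lgen 1 ⊓ AddSubgroup.map R.toAddMonoidHom (Lgen 1)).addSubgroupOf (Lgen 1)
        = (fhom 1 4 3 5).ker := by
      ext ⟨x, hx⟩
      obtain ⟨a, b, rfl⟩ := mem_Lgen.mp hx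
      rw [AddSubgroup.mem_addSubgroupOf, AddMonoidHom.mem_ker, fhom_apply,
        ZMod.intCast_zmod_eq_zero_iff_dvd, AddSubgroup.mem_inf,
        and_iff_right ⟨a, b, rfl⟩, hmap, hsymm]
      dsimp only
      constructor
      · rintro ⟨c, d, h⟩
        rw [Prod.ext_iff] at h
        have h1 : ((4 * ((1 * a : ℤ) : ℝ) + 3 * ((b : ℤ) : ℝ)) / 5) = ((1 * c : ℤ) : ℝ) := h.1
        have h1' : (4 * (1 * a) + 3 * b : ℤ) = 5 * (1 * c) := by
          have : (4 * ((1 * a : ℤ) : ℝ) + 3 * ((b : ℤ) : ℝ)) = 5 * ((1 * c : ℤ) : ℝ) := by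
            rw [div_eq_iff (by norm_num : (5:ℝ) ≠ 0)] at h1; linarith
          exact_mod_cast this
        omega
      · intro h
        obtain ⟨c, hc⟩ : ∃ c : ℤ, 4 * (1 * a) + 3 * b = 5 * (1 * c) := ⟨(4 * a + 3 * b) / 5, by omega⟩
        obtain ⟨d, hd⟩ : ∃ d : ℤ, -3 * (1 * a) + 4 * b = 5 * d := ⟨(-3 * a + 4 * b) / 5, by omega⟩
        refine ⟨c, d, ?_⟩
        rw [Prod.ext_iff]
        constructor
        · have := congrArg (Int.cast : ℤ → ℝ) hc
          push_cast at this ⊢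
          linarith
        · have := congrArg (Int.cast : ℤ → ℝ) hd
          push_cast at this ⊢
          linarith
    rw [hker]
    apply index_eq
    intro z
    obtain ⟨k, rfl⟩ := ZMod.intCast_surjective z
    refine ⟨⟨(((1 * (4 * k) : ℤ) : ℝ), ((0 : ℤ) : ℝ)), mem_Lgen.mpr ⟨4 * k, 0, rfl⟩⟩, ?_⟩
    rw [fhom_apply]
    have : (4 * (1 * (4 * k)) + 3 * 0 : ℤ) = 16 * k := by ring
    rw [this]
    push_cast
    have h16 : ((16 : ℤ) : ZMod 5) = 1 := by decide
    push_cast at h16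
    rw [h16, one_mul]
end

section
/- Let Γ₁ = ℤ² and let Γ₂ ≤ ℤ² be the subgroup generated by (6,0) and (2,1), which has index 6 in ℤ². Let R be the rotation of ℝ² with matrix (1/5)·[[4, −3],[3, 4]]. Then the coincidence index of R with respect to Γ₂ is [Γ₂ : Γ₂ ∩ R(Γ₂)] = 10, while [Γ₁ : Γ₁ ∩ R(Γ₁)] = 5. -/
open AddSubgroup

/-- cast embedding ℤ² → ℝ² -/
def f1 : ℤ × ℤ →+ ℝ × ℝ where
  toFun p := ((p.1 : ℝ), (p.2 : ℝ))
  map_zero' := by simp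
  map_add' p q := by simp [Prod.ext_iff]

/-- parametrization of Γ₂ -/
def f2 : ℤ × ℤ →+ ℝ × ℝ where
  toFun p := ((6 * (p.1 : ℝ) + 2 * (p.2 : ℝ)), ((p.2 : ℤ) : ℝ))
  map_zero' := by simp
  map_add' p q := by
    refine Prod.ext ?_ ?_ <;> simp [Prod.fst_add, Prod.snd_add] <;> push_cast <;> ring

def g1 : ℤ × ℤ →+ ZMod 6 where
  toFun p := ((p.1 - 2 * p.2 : ℤ) : ZMod 6)
  map_zero' := by simp
  map_add' p q := by simp only [Prod.fst_add, Prod.snd_add]; push_cast; ring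

def g2 : ℤ × ℤ →+ ZMod 5 × ZMod 2 where
  toFun p := (((3 * p.1 + 2 * p.2 : ℤ) : ZMod 5), ((p.2 : ℤ) : ZMod 2))
  map_zero' := by simp
  map_add' p q := by
    refine Prod.ext ?_ ?_ <;> simp only [Prod.fst_add, Prod.snd_add] <;> push_cast <;> ring

def g3 : ℤ × ℤ →+ ZMod 5 where
  toFun p := ((2 * p.1 - p.2 : ℤ) : ZMod 5)
  map_zero' := by simp
  map_add' p q := by simp only [Prod.fst_add, Prod.snd_add]; push_cast; ring

lemma g1_surj : Function.Surjective g1 := by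
  intro c
  obtain ⟨a, rfl⟩ := ZMod.intCast_surjective c
  exact ⟨(a, 0), by simp [g1]⟩

lemma g2_surj : Function.Surjective g2 := by
  rintro ⟨c, d⟩
  obtain ⟨a, rfl⟩ := ZMod.intCast_surjective c
  obtain ⟨b, rfl⟩ := ZMod.intCast_surjective d
  refine ⟨(2 * a - 4 * b, b), Prod.ext ?_ ?_⟩
  · show ((3 * (2 * a - 4 * b) + 2 * b : ℤ) : ZMod 5) = ((a : ℤ) : ZMod 5)
    rw [ZMod.intCast_eq_intCast_iff']; omega
  · rfl

lemma g3_surj : Function.Surjective g3 := by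
  intro c
  obtain ⟨a, rfl⟩ := ZMod.intCast_surjective c
  refine ⟨(0, -a), ?_⟩
  show ((2 * 0 - (-a) : ℤ) : ZMod 5) = ((a : ℤ) : ZMod 5)
  rw [ZMod.intCast_eq_intCast_iff']; omega

lemma index_ker_eq {N : Type*} [AddCommGroup N] (g : ℤ × ℤ →+ N)
    (hs : Function.Surjective g) : g.ker.index = Nat.card N := by
  rw [AddSubgroup.index_ker, AddMonoidHom.range_eq_top.mpr hs]
  exact Nat.card_congr AddSubgroup.topEquiv.toEquiv

lemma key_pair (p q x : ℝ × ℝ) : (∃ m n : ℤ, m • p + n • q = x) ↔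
    ∃ m n : ℤ, (m : ℝ) * p.1 + n * q.1 = x.1 ∧ (m : ℝ) * p.2 + n * q.2 = x.2 := by
  constructor
  · rintro ⟨m, n, rfl⟩
    exact ⟨m, n, by simp [Prod.smul_def], by simp [Prod.smul_def]⟩
  · rintro ⟨m, n, h1, h2⟩
    refine ⟨m, n, Prod.ext ?_ ?_⟩ <;> simpa [Prod.smul_def]

theorem stmt_15 (R : (ℝ × ℝ) ≃+ (ℝ × ℝ))
    (hR : ∀ p : ℝ × ℝ, R p = ((4 * p.1 - 3 * p.2) / 5, (3 * p.1 + 4 * p.2) / 5))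
    (Γ₁ Γ₂ : AddSubgroup (ℝ × ℝ))
    (hΓ₁ : Γ₁ = AddSubgroup.closure {((1 : ℝ), (0 : ℝ)), ((0 : ℝ), (1 : ℝ))})
    (hΓ₂ : Γ₂ = AddSubgroup.closure {((6 : ℝ), (0 : ℝ)), ((2 : ℝ), (1 : ℝ))}) :
    AddSubgroup.relIndex Γ₂ Γ₁ = 6 ∧
    AddSubgroup.relIndex (Γ₂ ⊓ AddSubgroup.map R.toAddMonoidHom Γ₂) Γ₂ = 10 ∧
    AddSubgroup.relIndex (Γ₁ ⊓ AddSubgroup.map R.toAddMonoidHom Γ₁) Γ₁ = 5 := by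
  -- formula for R.symm
  have hRs : ∀ p : ℝ × ℝ,
      R.symm p = ((4 * p.1 + 3 * p.2) / 5, (-3 * p.1 + 4 * p.2) / 5) := by
    intro p
    rw [AddEquiv.symm_apply_eq, hR]
    obtain ⟨x, y⟩ := p
    simp only [Prod.mk.injEq]
    constructor <;> ring
  -- membership characterizations
  have hmem1 : ∀ x : ℝ × ℝ, x ∈ Γ₁ ↔ ∃ m n : ℤ, x.1 = (m : ℝ) ∧ x.2 = (n : ℝ) := by
    intro x
    rw [hΓ₁, AddSubgroup.mem_closure_pair, key_pair]
    constructor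
    · rintro ⟨m, n, h1, h2⟩
      refine ⟨m, n, ?_, ?_⟩ <;> simp only at h1 h2 <;> linarith
    · rintro ⟨m, n, h1, h2⟩
      refine ⟨m, n, ?_, ?_⟩ <;> simp only <;> linarith
  have hmem2 : ∀ x : ℝ × ℝ, x ∈ Γ₂ ↔
      ∃ m n : ℤ, x.1 = 6 * (m : ℝ) + 2 * (n : ℝ) ∧ x.2 = (n : ℝ) := by
    intro x
    rw [hΓ₂, AddSubgroup.mem_closure_pair, key_pair]
    constructor
    · rintro ⟨m, n, h1, h2⟩
      refine ⟨m, n, ?_, ?_⟩ <;> simp only at h1 h2 <;> linarith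
    · rintro ⟨m, n, h1, h2⟩
      refine ⟨m, n, ?_, ?_⟩ <;> simp only <;> linarith
  -- map of full lattices
  have hmap1 : AddSubgroup.map f1 ⊤ = Γ₁ := by
    ext x
    simp only [AddSubgroup.mem_map, AddSubgroup.mem_top, true_and, hmem1]
    constructor
    · rintro ⟨⟨a, b⟩, rfl⟩; exact ⟨a, b, rfl, rfl⟩
    · rintro ⟨m, n, h1, h2⟩
      exact ⟨(m, n), Prod.ext h1.symm h2.symm⟩
  have hmap2 : AddSubgroup.map f2 ⊤ = Γ₂ := by
    ext x
    simp only [AddSubgroup.mem_map, AddSubgroup.mem_top, true_and, hmem2]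
    constructor
    · rintro ⟨⟨a, b⟩, rfl⟩; exact ⟨a, b, rfl, rfl⟩
    · rintro ⟨m, n, h1, h2⟩
      exact ⟨(m, n), Prod.ext h1.symm h2.symm⟩
  have hmemR : ∀ (Γ : AddSubgroup (ℝ × ℝ)) (x : ℝ × ℝ),
      x ∈ AddSubgroup.map R.toAddMonoidHom Γ ↔ R.symm x ∈ Γ := by
    intro Γ x
    exact AddSubgroup.mem_map_equiv
  refine ⟨?_, ?_, ?_⟩
  -- Part 1 : relIndex Γ₂ Γ₁ = 6
  · have hker : AddSubgroup.comap f1 Γ₂ = g1.ker := by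
      ext ⟨a, b⟩
      rw [AddSubgroup.mem_comap, AddMonoidHom.mem_ker, hmem2]
      show (∃ m n : ℤ, ((a : ℝ)) = 6 * (m : ℝ) + 2 * (n : ℝ) ∧ ((b : ℝ)) = (n : ℝ)) ↔
        ((a - 2 * b : ℤ) : ZMod 6) = 0
      rw [ZMod.intCast_zmod_eq_zero_iff_dvd]
      constructor
      · rintro ⟨m, n, h1, h2⟩
        have e1 : a = 6 * m + 2 * n := by exact_mod_cast h1
        have e2 : b = n := by exact_mod_cast h2
        omega
      · intro h
        refine ⟨(a - 2 * b) / 6, b, ?_, rfl⟩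
        have e : a = 6 * ((a - 2 * b) / 6) + 2 * b := by omega
        exact_mod_cast congrArg (Int.cast : ℤ → ℝ) e
    calc AddSubgroup.relIndex Γ₂ Γ₁
        = AddSubgroup.relIndex Γ₂ (AddSubgroup.map f1 ⊤) := by rw [hmap1]
      _ = AddSubgroup.relIndex (AddSubgroup.comap f1 Γ₂) ⊤ :=
          (AddSubgroup.relIndex_comap Γ₂ f1 ⊤).symm
      _ = (AddSubgroup.comap f1 Γ₂).index := AddSubgroup.relIndex_top_right _
      _ = Nat.card (ZMod 6) := by rw [hker]; exact index_ker_eq g1 g1_surj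
      _ = 6 := Nat.card_zmod 6
  -- Part 2 : relIndex (Γ₂ ⊓ RΓ₂) Γ₂ = 10
  · have hker : AddSubgroup.comap f2 (Γ₂ ⊓ AddSubgroup.map R.toAddMonoidHom Γ₂) = g2.ker := by
      ext ⟨m, n⟩
      have hin : f2 (m, n) ∈ Γ₂ := by
        rw [← hmap2]; exact ⟨(m, n), AddSubgroup.mem_top _, rfl⟩
      have hf2 : f2 (m, n) = (6 * (m : ℝ) + 2 * (n : ℝ), (n : ℝ)) := rfl
      rw [AddSubgroup.mem_comap, AddSubgroup.mem_inf, hmemR, hRs, AddMonoidHom.mem_ker, hf2]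
      have hg2 : (g2 (m, n) = 0) ↔
          (((3 * m + 2 * n : ℤ) : ZMod 5) = 0 ∧ ((n : ℤ) : ZMod 2) = 0) := by
        rw [show g2 (m, n) = ((((3 * m + 2 * n : ℤ) : ZMod 5), ((n : ℤ) : ZMod 2))) from rfl,
          show (0 : ZMod 5 × ZMod 2) = ((0 : ZMod 5), (0 : ZMod 2)) from rfl, Prod.mk.injEq]
      rw [hg2, ZMod.intCast_zmod_eq_zero_iff_dvd, ZMod.intCast_zmod_eq_zero_iff_dvd]
      constructor
      · rintro ⟨-, h⟩
        rw [hmem2] at h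
        obtain ⟨u, v, h1, h2⟩ := h
        dsimp only at h1 h2
        have e1 : (24 * m + 11 * n : ℝ) = ((30 * u + 10 * v : ℤ) : ℝ) := by
          push_cast; push_cast at h1; linarith
        have e2 : (-18 * m - 2 * n : ℝ) = ((5 * v : ℤ) : ℝ) := by
          push_cast; push_cast at h2; linarith
        have e1' : 24 * m + 11 * n = 30 * u + 10 * v := by exact_mod_cast e1
        have e2' : -18 * m - 2 * n = 5 * v := by exact_mod_cast e2
        omega
      · rintro ⟨h5, h2'⟩
        refine ⟨hin, ?_⟩
        rw [hmem2]
        refine ⟨2 * m + n / 2, -((18 * m + 2 * n) / 5), ?_, ?_⟩ <;> dsimp only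
        · have e : 24 * m + 11 * n
              = 5 * (6 * (2 * m + n / 2) + 2 * (-((18 * m + 2 * n) / 5))) := by omega
          have := congrArg (Int.cast : ℤ → ℝ) e
          push_cast at this ⊢
          linarith
        · have e : -18 * m - 2 * n = 5 * (-((18 * m + 2 * n) / 5)) := by omega
          have := congrArg (Int.cast : ℤ → ℝ) e
          push_cast at this ⊢
          linarith
    calc AddSubgroup.relIndex (Γ₂ ⊓ AddSubgroup.map R.toAddMonoidHom Γ₂) Γ₂
        = AddSubgroup.relIndex (Γ₂ ⊓ AddSubgroup.map R.toAddMonoidHom Γ₂)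
            (AddSubgroup.map f2 ⊤) := by rw [hmap2]
      _ = AddSubgroup.relIndex
            (AddSubgroup.comap f2 (Γ₂ ⊓ AddSubgroup.map R.toAddMonoidHom Γ₂)) ⊤ :=
          (AddSubgroup.relIndex_comap _ f2 ⊤).symm
      _ = (AddSubgroup.comap f2 (Γ₂ ⊓ AddSubgroup.map R.toAddMonoidHom Γ₂)).index :=
          AddSubgroup.relIndex_top_right _
      _ = Nat.card (ZMod 5 × ZMod 2) := by rw [hker]; exact index_ker_eq g2 g2_surj
      _ = 10 := by rw [Nat.card_prod, Nat.card_zmod, Nat.card_zmod]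
  -- Part 3 : relIndex (Γ₁ ⊓ RΓ₁) Γ₁ = 5
  · have hker : AddSubgroup.comap f1 (Γ₁ ⊓ AddSubgroup.map R.toAddMonoidHom Γ₁) = g3.ker := by
      ext ⟨a, b⟩
      have hin : f1 (a, b) ∈ Γ₁ := by
        rw [← hmap1]; exact ⟨(a, b), AddSubgroup.mem_top _, rfl⟩
      have hf1 : f1 (a, b) = ((a : ℝ), (b : ℝ)) := rfl
      rw [AddSubgroup.mem_comap, AddSubgroup.mem_inf, hmemR, hRs, AddMonoidHom.mem_ker, hf1]
      have hg3 : (g3 (a, b) = 0) ↔ ((2 * a - b : ℤ) : ZMod 5) = 0 := Iff.rfl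
      rw [hg3, ZMod.intCast_zmod_eq_zero_iff_dvd]
      constructor
      · rintro ⟨-, h⟩
        rw [hmem1] at h
        obtain ⟨u, v, h1, h2⟩ := h
        dsimp only at h1 h2
        have e1 : (4 * a + 3 * b : ℝ) = ((5 * u : ℤ) : ℝ) := by
          push_cast; push_cast at h1; linarith
        have e2 : (-3 * a + 4 * b : ℝ) = ((5 * v : ℤ) : ℝ) := by
          push_cast; push_cast at h2; linarith
        have e1' : 4 * a + 3 * b = 5 * u := by exact_mod_cast e1
        have e2' : -3 * a + 4 * b = 5 * v := by exact_mod_cast e2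
        omega
      · intro h
        refine ⟨hin, ?_⟩
        rw [hmem1]
        refine ⟨(4 * a + 3 * b) / 5, (-3 * a + 4 * b) / 5, ?_, ?_⟩ <;> dsimp only
        · have e : 4 * a + 3 * b = 5 * ((4 * a + 3 * b) / 5) := by omega
          have := congrArg (Int.cast : ℤ → ℝ) e
          push_cast at this ⊢
          linarith
        · have e : -3 * a + 4 * b = 5 * ((-3 * a + 4 * b) / 5) := by omega
          have := congrArg (Int.cast : ℤ → ℝ) e
          push_cast at this ⊢
          linarith
    calc AddSubgroup.relIndex (Γ₁ ⊓ AddSubgroup.map R.toAddMonoidHom Γ₁) Γ₁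
        = AddSubgroup.relIndex (Γ₁ ⊓ AddSubgroup.map R.toAddMonoidHom Γ₁)
            (AddSubgroup.map f1 ⊤) := by rw [hmap1]
      _ = AddSubgroup.relIndex
            (AddSubgroup.comap f1 (Γ₁ ⊓ AddSubgroup.map R.toAddMonoidHom Γ₁)) ⊤ :=
          (AddSubgroup.relIndex_comap _ f1 ⊤).symm
      _ = (AddSubgroup.comap f1 (Γ₁ ⊓ AddSubgroup.map R.toAddMonoidHom Γ₁)).index :=
          AddSubgroup.relIndex_top_right _
      _ = Nat.card (ZMod 5) := by rw [hker]; exact index_ker_eq g3 g3_surj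
      _ = 5 := Nat.card_zmod 5
end
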